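/- Let {Sₙ} be a one-dimensional random walk on ℤ with i.i.d. steps. Fix N ≥ 2 and integers y₁,…,y_N with |yₙ − y_{n+1}| ≤ 1 for all n. Let X₀ be uniform on {0,…,N−1} independent of the walk, and Rₙ = (X₀ + Sₙ) mod N. Define p₀ = 1 and pᵢ = max_{|y| ≤ i} P{Sᵢ ∈ [y]_N} for i ≥ 1. Then P(⋃_{n=1}^N {Rₙ = yₙ mod N}) ≥ 1 / ∑_{i=0}^{N-1} pᵢ. -/

import Mathlib

open MeasureTheory ProbabilityTheory Finset ENNReal

lemma idadd {Ω : Type*} [MeasurableSpace Ω] {μ : Measure Ω} [IsProbabilityMeasure μ]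
    {f g f' g' : Ω → ℤ} (hf : Measurable f) (hg : Measurable g) (hf' : Measurable f')
    (hg' : Measurable g') (hfg : IndepFun f g μ) (hfg' : IndepFun f' g' μ)
    (h1 : IdentDistrib f f' μ μ) (h2 : IdentDistrib g g' μ μ) :
    IdentDistrib (f + g) (f' + g') μ μ := by
  refine ⟨(hf.add hg).aemeasurable, (hf'.add hg').aemeasurable, ?_⟩
  have key : ∀ (u v : Ω → ℤ), Measurable u → Measurable v → IndepFun u v μ →
      μ.map (u + v) = ((μ.map u).prod (μ.map v)).map (fun z : ℤ × ℤ => z.1 + z.2) := by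
    intro u v hu hv huv
    rw [← (indepFun_iff_map_prod_eq_prod_map_map hu.aemeasurable hv.aemeasurable).1 huv,
      Measure.map_map (measurable_of_countable _) (hu.prodMk hv)]
    rfl
  rw [key f g hf hg hfg, key f' g' hf' hg' hfg', h1.map_eq, h2.map_eq]

lemma block_sum_ident {Ω : Type*} [MeasurableSpace Ω] {μ : Measure Ω} [IsProbabilityMeasure μ]
    {X : ℕ → Ω → ℤ} (hX : ∀ i, Measurable (X i))
    (hindep : iIndepFun X μ)
    (hident : ∀ i, IdentDistrib (X i) (X 0) μ μ) (m k : ℕ) :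
    IdentDistrib (fun ω => ∑ j ∈ Finset.Ico m (m + k), X j ω)
      (fun ω => ∑ j ∈ Finset.range k, X j ω) μ μ := by
  induction k with
  | zero => simp; exact IdentDistrib.refl aemeasurable_const
  | succ k ih =>
    have h1 : (fun ω => ∑ j ∈ Finset.Ico m (m + (k+1)), X j ω)
        = (fun ω => ∑ j ∈ Finset.Ico m (m + k), X j ω) + X (m + k) := by
      funext ω
      have : m + (k + 1) = (m + k) + 1 := by ring
      rw [this, Finset.sum_Ico_succ_top (Nat.le_add_right m k)]
      rfl
    have h2 : (fun ω => ∑ j ∈ Finset.range (k+1), X j ω)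
        = (fun ω => ∑ j ∈ Finset.range k, X j ω) + X k := by
      funext ω; rw [Finset.sum_range_succ]; rfl
    rw [h1, h2]
    have meas1 : Measurable (fun ω => ∑ j ∈ Finset.Ico m (m + k), X j ω) :=
      Finset.measurable_sum _ (fun j _ => hX j)
    have meas2 : Measurable (fun ω => ∑ j ∈ Finset.range k, X j ω) :=
      Finset.measurable_sum _ (fun j _ => hX j)
    have i1 : IndepFun (fun ω => ∑ j ∈ Finset.Ico m (m + k), X j ω) (X (m + k)) μ := by
      have := hindep.indepFun_finset_sum_of_notMem hX
        (s := Finset.Ico m (m + k)) (i := m + k) (by simp)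
      have e : (∑ j ∈ Finset.Ico m (m + k), X j) = fun ω => ∑ j ∈ Finset.Ico m (m + k), X j ω := by
        funext ω; simp
      rwa [e] at this
    have i2 : IndepFun (fun ω => ∑ j ∈ Finset.range k, X j ω) (X k) μ := by
      have := hindep.indepFun_finset_sum_of_notMem hX
        (s := Finset.range k) (i := k) (by simp)
      have e : (∑ j ∈ Finset.range k, X j) = fun ω => ∑ j ∈ Finset.range k, X j ω := by
        funext ω; simp
      rwa [e] at this
    exact idadd meas1 (hX _) meas2 (hX _) i1 i2 ih ((hident (m+k)).trans (hident k).symm)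

lemma nu_apply {Ω : Type*} [MeasurableSpace Ω] (μ : Measure Ω) [IsProbabilityMeasure μ]
    (N : ℕ) (h : (Finset.range N).Nonempty) (s : Set (ℕ × Ω)) (hs : MeasurableSet s) :
    ((PMF.uniformOfFinset (Finset.range N) h).toMeasure.prod μ) s
      = ∑ x ∈ Finset.range N, (N : ℝ≥0∞)⁻¹ * μ (Prod.mk x ⁻¹' s) := by
  rw [Measure.prod_apply hs, lintegral_countable' (fun x => μ (Prod.mk x ⁻¹' s))]
  rw [tsum_eq_sum (s := Finset.range N) (by
    intro x hx
    rw [PMF.toMeasure_apply_singleton _ _ (measurableSet_singleton x),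
      PMF.uniformOfFinset_apply_of_notMem h hx, mul_zero])]
  refine Finset.sum_congr rfl fun x hx => ?_
  rw [PMF.toMeasure_apply_singleton _ _ (measurableSet_singleton x),
    PMF.uniformOfFinset_apply_of_mem h hx, Finset.card_range, mul_comm]

lemma slice_partition {Ω : Type*} [MeasurableSpace Ω] (μ : Measure Ω) [IsProbabilityMeasure μ]
    (N : ℕ) (hN : 1 ≤ N) (f : Ω → ℤ) (hf : Measurable f) (c : ℤ) :
    ∑ x ∈ Finset.range N, μ {ω | ((x : ℤ) + f ω) % (N : ℤ) = c % (N : ℤ)} = 1 := by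
  have hNZ : (N : ℤ) ≠ 0 := by exact_mod_cast (by omega : N ≠ 0)
  have hNpos : (0 : ℤ) < N := by exact_mod_cast hN
  have hmeas : ∀ x : ℕ, MeasurableSet {ω | ((x : ℤ) + f ω) % (N : ℤ) = c % (N : ℤ)} := fun x =>
    ((measurable_of_countable (fun z : ℤ => ((x : ℤ) + z) % (N : ℤ))).comp hf)
      (measurableSet_singleton (c % (N : ℤ)))
  have hdisj : (↑(Finset.range N) : Set ℕ).PairwiseDisjoint
      (fun x => {ω | ((x : ℤ) + f ω) % (N : ℤ) = c % (N : ℤ)}) := by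
    intro x hx x' hx' hne
    simp only [Finset.coe_range, Set.mem_Iio] at hx hx'
    refine Set.disjoint_left.2 fun ω h1 h2 => hne ?_
    simp only [Set.mem_setOf_eq] at h1 h2
    have h3 : ((x : ℤ) + f ω) % (N : ℤ) = ((x' : ℤ) + f ω) % (N : ℤ) := h1.trans h2.symm
    have h4 : ((x : ℤ) - (x' : ℤ)) % (N : ℤ) = 0 := by
      have := Int.emod_eq_emod_iff_emod_sub_eq_zero.mp h3
      rwa [show ((x : ℤ) + f ω) - ((x' : ℤ) + f ω) = (x : ℤ) - x' by ring] at this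
    have h5 : (x : ℤ) % N = (x' : ℤ) % N := Int.emod_eq_emod_iff_emod_sub_eq_zero.mpr h4
    rw [Int.emod_eq_of_lt (by positivity) (by exact_mod_cast hx),
      Int.emod_eq_of_lt (by positivity) (by exact_mod_cast hx')] at h5
    exact_mod_cast h5
  have hcover : (⋃ x ∈ Finset.range N,
      {ω | ((x : ℤ) + f ω) % (N : ℤ) = c % (N : ℤ)}) = Set.univ := by
    refine Set.eq_univ_of_forall fun ω => ?_
    have hm0 : 0 ≤ (c - f ω) % (N : ℤ) := Int.emod_nonneg _ hNZ
    have hmN : (c - f ω) % (N : ℤ) < N := Int.emod_lt_of_pos _ hNpos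
    have hmem : ((c - f ω) % (N : ℤ)).toNat ∈ (Finset.range N : Set ℕ) := by
      simp only [Finset.coe_range, Set.mem_Iio]; omega
    refine Set.mem_biUnion hmem ?_
    have : ((((c - f ω) % (N : ℤ)).toNat : ℤ) + f ω) % (N : ℤ) = c % (N : ℤ) := by
      rw [Int.toNat_of_nonneg hm0, Int.emod_add_emod, sub_add_cancel]
    exact this
  calc ∑ x ∈ Finset.range N, μ {ω | ((x : ℤ) + f ω) % (N : ℤ) = c % (N : ℤ)}
      = μ (⋃ x ∈ Finset.range N, {ω | ((x : ℤ) + f ω) % (N : ℤ) = c % (N : ℤ)}) :=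
        (measure_biUnion_finset hdisj (fun x _ => hmeas x)).symm
    _ = 1 := by rw [hcover, measure_univ]

lemma slice_indep {Ω : Type*} [MeasurableSpace Ω] {μ : Measure Ω} [IsProbabilityMeasure μ]
    {X : ℕ → Ω → ℤ} (hX : ∀ i, Measurable (X i))
    (hindep : iIndepFun X μ) {m n : ℕ}
    (A B : Set Ω)
    (hA : ∃ T : Set ({i // i ∈ Finset.range m} → ℤ),
      A = (fun ω (i : {i // i ∈ Finset.range m}) => X i ω) ⁻¹' T)
    (hB : ∃ W : Set ({i // i ∈ Finset.Ico m n} → ℤ),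
      B = (fun ω (i : {i // i ∈ Finset.Ico m n}) => X i ω) ⁻¹' W) :
    μ (A ∩ B) = μ A * μ B := by
  obtain ⟨T, rfl⟩ := hA
  obtain ⟨W, rfl⟩ := hB
  have hd : Disjoint (Finset.range m) (Finset.Ico m n) := by
    rw [Finset.disjoint_left]
    intro a ha hb
    simp only [Finset.mem_range] at ha
    simp only [Finset.mem_Ico] at hb
    omega
  have hi := hindep.indepFun_finset (Finset.range m) (Finset.Ico m n) hd hX
  exact hi.measure_inter_preimage_eq_mul T W
    (Set.Countable.measurableSet (Set.to_countable T))
    (Set.Countable.measurableSet (Set.to_countable W))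

lemma ydiff (N : ℕ) (y : ℕ → ℤ)
    (hy : ∀ n, 1 ≤ n → n + 1 ≤ N → |y n - y (n + 1)| ≤ 1) :
    ∀ m n, 1 ≤ m → m ≤ n → n ≤ N → |y n - y m| ≤ ((n - m : ℕ) : ℤ) := by
  intro m n h1 hmn
  induction n, hmn using Nat.le_induction with
  | base => intro _; simp
  | succ n hmn ih =>
    intro hN
    have h2 : |y (n+1) - y m| ≤ |y (n+1) - y n| + |y n - y m| := by
      have := abs_sub_le (y (n+1)) (y n) (y m); linarith [this]
    have h3 : |y (n+1) - y n| ≤ 1 := by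
      rw [abs_sub_comm]; exact hy n (le_trans h1 hmn) hN
    have h4 := ih (by omega)
    have : ((n + 1 - m : ℕ) : ℤ) = ((n - m : ℕ) : ℤ) + 1 := by omega
    rw [this]; linarith

theorem catch_prob_lower_bound {Ω : Type*} [MeasurableSpace Ω] (μ : Measure Ω)
    [IsProbabilityMeasure μ] (X : ℕ → Ω → ℤ) (hX : ∀ i, Measurable (X i))
    (hindep : iIndepFun X μ)
    (hident : ∀ i, IdentDistrib (X i) (X 0) μ μ)
    (N : ℕ) (hN : 2 ≤ N) (y : ℕ → ℤ)
    (hy : ∀ n, 1 ≤ n → n + 1 ≤ N → |y n - y (n + 1)| ≤ 1)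
    (p : ℕ → ℝ≥0∞) (hp0 : p 0 = 1)
    (hp : ∀ i, 1 ≤ i → p i = ⨆ l ∈ Finset.Icc (-(i : ℤ)) (i : ℤ),
        μ {ω | (∑ j ∈ Finset.range i, X j ω) % (N : ℤ) = l % (N : ℤ)}) :
    (∑ i ∈ Finset.range N, p i)⁻¹ ≤
      ((PMF.uniformOfFinset (Finset.range N)
            (Finset.nonempty_range_iff.mpr (by omega))).toMeasure.prod μ)
        {q : ℕ × Ω | ∃ n, 1 ≤ n ∧ n ≤ N ∧
          ((q.1 : ℤ) + ∑ j ∈ Finset.range n, X j q.2) % (N : ℤ) = y n % (N : ℤ)} := by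
  classical
  have hne : (Finset.range N).Nonempty := Finset.nonempty_range_iff.mpr (by omega)
  set ν := (PMF.uniformOfFinset (Finset.range N) hne).toMeasure.prod μ with hνdef
  set S : ℕ → Ω → ℤ := fun n ω => ∑ j ∈ Finset.range n, X j ω with hSdef
  have hS : ∀ n, Measurable (S n) := fun n => Finset.measurable_sum _ (fun j _ => hX j)
  set A : ℕ → Set (ℕ × Ω) :=
    fun n => {q | ((q.1 : ℤ) + S n q.2) % (N : ℤ) = y n % (N : ℤ)} with hAdef
  have hA : ∀ n, MeasurableSet (A n) := by
    intro n
    have : Measurable (fun q : ℕ × Ω => ((q.1 : ℤ) + S n q.2) % (N : ℤ)) :=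
      (measurable_of_countable (fun z : ℕ × ℤ => ((z.1 : ℤ) + z.2) % (N : ℤ))).comp
        (measurable_fst.prodMk ((hS n).comp measurable_snd))
    exact this (measurableSet_singleton _)
  set SA : ℕ → ℕ → Set Ω :=
    fun n x => {ω | ((x : ℤ) + S n ω) % (N : ℤ) = y n % (N : ℤ)} with hSAdef
  have hSAslice : ∀ n x, Prod.mk x ⁻¹' A n = SA n x := fun n x => rfl
  have hSA : ∀ n x, MeasurableSet (SA n x) := fun n x =>
    ((measurable_of_countable (fun z : ℤ => ((x : ℤ) + z) % (N : ℤ))).comp (hS n))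
      (measurableSet_singleton _)
  set B : ℕ → Set (ℕ × Ω) := fun n => A n \ ⋃ m ∈ Finset.Ico 1 n, A m with hBdef
  have hB : ∀ n, MeasurableSet (B n) :=
    fun n => (hA n).diff (MeasurableSet.biUnion (Finset.Ico 1 n).countable_toSet
      (fun m _ => hA m))
  set SB : ℕ → ℕ → Set Ω := fun n x => SA n x \ ⋃ m ∈ Finset.Ico 1 n, SA m x with hSBdef
  have hSBslice : ∀ n x, Prod.mk x ⁻¹' B n = SB n x := by
    intro n x
    simp only [hBdef, hSBdef, Set.preimage_diff, Set.preimage_iUnion₂, hSAslice]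
  -- ν applied to A n
  have hAn : ∀ n, ν (A n) = (N : ℝ≥0∞)⁻¹ := by
    intro n
    rw [hνdef, nu_apply μ N hne _ (hA n)]
    have : ∀ x ∈ Finset.range N, (N : ℝ≥0∞)⁻¹ * μ (Prod.mk x ⁻¹' A n)
        = (N : ℝ≥0∞)⁻¹ * μ (SA n x) := fun x _ => by rw [hSAslice]
    rw [Finset.sum_congr rfl this, ← Finset.mul_sum,
      slice_partition μ N (by omega) (S n) (hS n) (y n), mul_one]
  -- the union is the target set
  have hUnion : {q : ℕ × Ω | ∃ n, 1 ≤ n ∧ n ≤ N ∧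
      ((q.1 : ℤ) + ∑ j ∈ Finset.range n, X j q.2) % (N : ℤ) = y n % (N : ℤ)}
      = ⋃ n ∈ Finset.Icc 1 N, A n := by
    ext q
    simp only [Set.mem_setOf_eq, Set.mem_iUnion, Finset.mem_Icc, hAdef, hSdef]
    tauto
  -- block events in the second coordinate
  set Ec : ℕ → ℕ → ℤ → Set Ω :=
    fun m n c => {ω | (∑ j ∈ Finset.Ico m n, X j ω) % (N : ℤ) = c % (N : ℤ)} with hEcdef
  have hEcmeas : ∀ m n c, MeasurableSet (Ec m n c) := fun m n c =>
    ((measurable_of_countable (fun z : ℤ => z % (N : ℤ))).comp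
      (Finset.measurable_sum _ (fun j _ => hX j))) (measurableSet_singleton _)
  -- SA as preimage of the tuple map
  have hSApre : ∀ m k x, k ≤ m → SA k x =
      (fun ω (i : {i // i ∈ Finset.range m}) => X (i : ℕ) ω) ⁻¹'
        {v : {i // i ∈ Finset.range m} → ℤ |
          ((x : ℤ) + ∑ i : {i // i ∈ Finset.range m}, (if (i : ℕ) < k then v i else 0)) % (N : ℤ) = y k % (N : ℤ)} := by
    intro m k x hk
    have hsum : ∀ ω, (∑ i : {i // i ∈ Finset.range m},
        (if (i : ℕ) < k then X (i : ℕ) ω else 0)) = S k ω := by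
      intro ω
      rw [Finset.sum_coe_sort (Finset.range m) (fun j => if j < k then X j ω else 0),
        ← Finset.sum_filter]
      congr 1
      ext j
      simp only [Finset.mem_filter, Finset.mem_range]
      omega
    ext ω
    simp only [Set.mem_preimage, Set.mem_setOf_eq, hSAdef, hsum ω]
  have hSBpre : ∀ m x, ∃ T : Set ({i // i ∈ Finset.range m} → ℤ),
      SB m x = (fun ω (i : {i // i ∈ Finset.range m}) => X (i : ℕ) ω) ⁻¹' T := by
    intro m x
    refine ⟨{v | ((x : ℤ) + ∑ i : {i // i ∈ Finset.range m}, (if (i : ℕ) < m then v i else 0)) % (N : ℤ) = y m % (N : ℤ)}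
      \ ⋃ k ∈ Finset.Ico 1 m, {v | ((x : ℤ) + ∑ i : {i // i ∈ Finset.range m}, (if (i : ℕ) < k then v i else 0)) % (N : ℤ)
        = y k % (N : ℤ)}, ?_⟩
    rw [Set.preimage_diff, Set.preimage_iUnion₂, hSBdef]
    simp only [← hSApre m m x le_rfl]
    congr 1
    refine Set.iUnion₂_congr fun k hk => ?_
    rw [← hSApre m k x (by simp only [Finset.mem_Ico] at hk; omega)]
  have hEcpre : ∀ m n c, Ec m n c =
      (fun ω (i : {i // i ∈ Finset.Ico m n}) => X (i : ℕ) ω) ⁻¹'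
        {w : {i // i ∈ Finset.Ico m n} → ℤ | (∑ i : {i // i ∈ Finset.Ico m n}, w i) % (N : ℤ) = c % (N : ℤ)} := by
    intro m n c
    ext ω
    simp only [Set.mem_preimage, Set.mem_setOf_eq, hEcdef,
      Finset.sum_coe_sort (Finset.Ico m n) (fun j => X j ω)]
  have hkey : ∀ m n x c, μ (SB m x ∩ Ec m n c) = μ (SB m x) * μ (Ec m n c) := by
    intro m n x c
    exact slice_indep hX hindep _ _ (hSBpre m x) ⟨_, hEcpre m n c⟩
  have hSBmeas : ∀ m x, MeasurableSet (SB m x) := fun m x =>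
    (hSA m x).diff (MeasurableSet.biUnion (Finset.Ico 1 m).countable_toSet (fun k _ => hSA k x))
  have hnuB : ∀ m n c, ν (B m ∩ Prod.snd ⁻¹' (Ec m n c)) = ν (B m) * μ (Ec m n c) := by
    intro m n c
    rw [hνdef, nu_apply μ N hne _ ((hB m).inter (measurable_snd (hEcmeas m n c))),
      nu_apply μ N hne _ (hB m)]
    have hslice : ∀ x, Prod.mk x ⁻¹' (B m ∩ Prod.snd ⁻¹' (Ec m n c)) = SB m x ∩ Ec m n c := by
      intro x
      rw [Set.preimage_inter, hSBslice]
      rfl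
    calc ∑ x ∈ Finset.range N, (N : ℝ≥0∞)⁻¹ * μ (Prod.mk x ⁻¹' (B m ∩ Prod.snd ⁻¹' (Ec m n c)))
        = ∑ x ∈ Finset.range N, ((N : ℝ≥0∞)⁻¹ * μ (SB m x)) * μ (Ec m n c) := by
          refine Finset.sum_congr rfl fun x _ => ?_
          rw [hslice x, hkey m n x c, mul_assoc]
      _ = (∑ x ∈ Finset.range N, (N : ℝ≥0∞)⁻¹ * μ (Prod.mk x ⁻¹' B m)) * μ (Ec m n c) := by
          rw [← Finset.sum_mul]
          congr 1
          refine Finset.sum_congr rfl fun x _ => ?_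
          rw [hSBslice]
  -- value of μ (Ec m n c) via identical distribution of block sums
  have hEcval : ∀ m n c, m ≤ n →
      μ (Ec m n c) = μ {ω | S (n - m) ω % (N : ℤ) = c % (N : ℤ)} := by
    intro m n c hmn
    have hid := block_sum_ident hX hindep hident m (n - m)
    rw [show m + (n - m) = n by omega] at hid
    have hD : MeasurableSet {z : ℤ | z % (N : ℤ) = c % (N : ℤ)} :=
      Set.Countable.measurableSet (Set.to_countable _)
    have e1 : Ec m n c = (fun ω => ∑ j ∈ Finset.Ico m n, X j ω) ⁻¹'
        {z : ℤ | z % (N : ℤ) = c % (N : ℤ)} := rfl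
    have e2 : {ω | S (n - m) ω % (N : ℤ) = c % (N : ℤ)}
        = (fun ω => ∑ j ∈ Finset.range (n - m), X j ω) ⁻¹'
          {z : ℤ | z % (N : ℤ) = c % (N : ℤ)} := rfl
    rw [e1, e2, ← Measure.map_apply (Finset.measurable_sum _ (fun j _ => hX j)) hD,
      ← Measure.map_apply (Finset.measurable_sum _ (fun j _ => hX j)) hD, hid.map_eq]
  -- bound by p
  have hEcp : ∀ m n, 1 ≤ m → m < n → n ≤ N → μ (Ec m n (y n - y m)) ≤ p (n - m) := by
    intro m n h1 hmn hnN
    rw [hEcval m n _ (le_of_lt hmn), hp (n - m) (by omega)]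
    have hmem : y n - y m ∈ Finset.Icc (-((n - m : ℕ) : ℤ)) ((n - m : ℕ) : ℤ) := by
      rw [Finset.mem_Icc, ← abs_le]
      exact ydiff N y hy m n h1 (le_of_lt hmn) hnN
    exact le_biSup (fun l => μ {ω | (∑ j ∈ Finset.range (n - m), X j ω) % (N : ℤ)
      = l % (N : ℤ)}) hmem
  -- the main per-pair bound
  have hBA : ∀ m n, 1 ≤ m → m ≤ n → n ≤ N → ν (B m ∩ A n) ≤ ν (B m) * p (n - m) := by
    intro m n h1 hmn hnN
    rcases eq_or_lt_of_le hmn with rfl | hlt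
    · have : B m ∩ A m = B m := Set.inter_eq_left.mpr Set.diff_subset
      rw [this, Nat.sub_self, hp0, mul_one]
    · have hsubset : B m ∩ A n ⊆ B m ∩ Prod.snd ⁻¹' (Ec m n (y n - y m)) := by
        rintro q ⟨hqB, hqA⟩
        refine ⟨hqB, ?_⟩
        have hqm : q ∈ A m := hqB.1
        simp only [hAdef, Set.mem_setOf_eq] at hqm hqA
        show (∑ j ∈ Finset.Ico m n, X j q.2) % (N : ℤ) = (y n - y m) % (N : ℤ)
        rw [Finset.sum_Ico_eq_sub _ (le_of_lt hlt)]
        have e1 := Int.emod_eq_emod_iff_emod_sub_eq_zero.mp hqA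
        have e2 := Int.emod_eq_emod_iff_emod_sub_eq_zero.mp hqm
        refine Int.emod_eq_emod_iff_emod_sub_eq_zero.mpr ?_
        have : (∑ j ∈ Finset.range n, X j q.2) - (∑ j ∈ Finset.range m, X j q.2)
            - (y n - y m)
            = (((q.1 : ℤ) + S n q.2) - y n) - (((q.1 : ℤ) + S m q.2) - y m) := by
          simp only [hSdef]; ring
        rw [this, Int.sub_emod, e1, e2]
        simp
      calc ν (B m ∩ A n) ≤ ν (B m ∩ Prod.snd ⁻¹' (Ec m n (y n - y m))) :=
            measure_mono hsubset
        _ = ν (B m) * μ (Ec m n (y n - y m)) := hnuB m n _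
        _ ≤ ν (B m) * p (n - m) := mul_le_mul_right (hEcp m n h1 hlt hnN) _
  -- minimal index
  have hmin : ∀ n (q : ℕ × Ω), 1 ≤ n → q ∈ A n → ∃ m, 1 ≤ m ∧ m ≤ n ∧ q ∈ B m := by
    intro n q hn hq
    have hw : ∃ m, 1 ≤ m ∧ q ∈ A m := ⟨n, hn, hq⟩
    refine ⟨Nat.find hw, (Nat.find_spec hw).1, Nat.find_min' hw ⟨hn, hq⟩, ?_⟩
    refine ⟨(Nat.find_spec hw).2, ?_⟩
    intro hmem
    simp only [Set.mem_iUnion] at hmem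
    obtain ⟨k, hk, hqk⟩ := hmem
    simp only [Finset.mem_Ico] at hk
    exact Nat.find_min hw hk.2 ⟨hk.1, hqk⟩
  -- counting bound
  have hcount : ∀ n ∈ Finset.Icc 1 N, ν (A n) ≤ ∑ m ∈ Finset.Icc 1 n, ν (B m ∩ A n) := by
    intro n hn
    simp only [Finset.mem_Icc] at hn
    have hsub : A n ⊆ ⋃ m ∈ Finset.Icc 1 n, (B m ∩ A n) := by
      intro q hq
      obtain ⟨m, h1, h2, h3⟩ := hmin n q hn.1 hq
      exact Set.mem_biUnion (Finset.mem_coe.mpr (Finset.mem_Icc.mpr ⟨h1, h2⟩)) ⟨h3, hq⟩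
    exact le_trans (measure_mono hsub) (measure_biUnion_finset_le _ _)
  -- the expected number of hits is 1
  have hone : (1 : ℝ≥0∞) = ∑ n ∈ Finset.Icc 1 N, ν (A n) := by
    have : ∀ n ∈ Finset.Icc 1 N, ν (A n) = (N : ℝ≥0∞)⁻¹ := fun n _ => hAn n
    rw [Finset.sum_congr rfl this, Finset.sum_const, Nat.card_Icc]
    simp only [Nat.add_sub_cancel, nsmul_eq_mul]
    rw [ENNReal.mul_inv_cancel (by exact_mod_cast (by omega : N ≠ 0)) (natCast_ne_top N)]
  -- chain of inequalities
  have hchain : (1 : ℝ≥0∞) ≤ (∑ m ∈ Finset.Icc 1 N, ν (B m)) * ∑ i ∈ Finset.range N, p i := by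
    calc (1 : ℝ≥0∞) = ∑ n ∈ Finset.Icc 1 N, ν (A n) := hone
      _ ≤ ∑ n ∈ Finset.Icc 1 N, ∑ m ∈ Finset.Icc 1 n, ν (B m ∩ A n) :=
          Finset.sum_le_sum hcount
      _ ≤ ∑ n ∈ Finset.Icc 1 N, ∑ m ∈ Finset.Icc 1 n, ν (B m) * p (n - m) := by
          refine Finset.sum_le_sum fun n hn => Finset.sum_le_sum fun m hm => ?_
          simp only [Finset.mem_Icc] at hn hm
          exact hBA m n hm.1 hm.2 hn.2
      _ = ∑ m ∈ Finset.Icc 1 N, ∑ n ∈ Finset.Icc m N, ν (B m) * p (n - m) := by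
          refine Finset.sum_comm' fun n m => ?_
          simp only [Finset.mem_Icc]
          omega
      _ = ∑ m ∈ Finset.Icc 1 N, ν (B m) * ∑ n ∈ Finset.Icc m N, p (n - m) := by
          refine Finset.sum_congr rfl fun m _ => ?_
          rw [Finset.mul_sum]
      _ ≤ ∑ m ∈ Finset.Icc 1 N, ν (B m) * ∑ i ∈ Finset.range N, p i := by
          refine Finset.sum_le_sum fun m hm => mul_le_mul_right ?_ _
          simp only [Finset.mem_Icc] at hm
          rw [← Finset.Ico_add_one_right_eq_Icc, Finset.sum_Ico_eq_sum_range]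
          have : ∀ i ∈ Finset.range (N + 1 - m), p (m + i - m) = p i := fun i _ => by
            congr 1; omega
          rw [Finset.sum_congr rfl this]
          exact Finset.sum_le_sum_of_subset
            (Finset.range_subset_range.mpr (by omega))
      _ = (∑ m ∈ Finset.Icc 1 N, ν (B m)) * ∑ i ∈ Finset.range N, p i := by
          rw [Finset.sum_mul]
  -- sum of B's is ν of the union
  have hdisjB : (↑(Finset.Icc 1 N) : Set ℕ).PairwiseDisjoint B := by
    have key : ∀ m m', 1 ≤ m → m < m' → Disjoint (B m) (B m') := by
      intro m m' h1 hlt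
      refine Set.disjoint_left.2 fun q hqm hqm' => ?_
      have hqA : q ∈ A m := hqm.1
      have hmem : m ∈ (Finset.Ico 1 m' : Set ℕ) := by
        simp only [Finset.coe_Ico, Set.mem_Ico]
        exact ⟨h1, hlt⟩
      exact hqm'.2 (Set.mem_biUnion hmem hqA)
    intro m hm m' hm' hne
    simp only [Finset.coe_Icc, Set.mem_Icc] at hm hm'
    rcases lt_or_gt_of_ne hne with h | h
    · exact key m m' hm.1 h
    · exact (key m' m hm'.1 h).symm
  have hUB : (⋃ m ∈ Finset.Icc 1 N, B m) = ⋃ n ∈ Finset.Icc 1 N, A n := by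
    apply Set.Subset.antisymm
    · refine Set.iUnion₂_subset fun m hm => ?_
      exact Set.subset_biUnion_of_mem (u := A) hm |>.trans' Set.diff_subset
    · refine Set.iUnion₂_subset fun n hn q hq => ?_
      simp only [Finset.mem_Icc] at hn
      obtain ⟨m, h1, h2, h3⟩ := hmin n q hn.1 hq
      exact Set.mem_biUnion (by simp only [Finset.mem_Icc]; omega : m ∈ Finset.Icc 1 N) h3
  have hsumB : ∑ m ∈ Finset.Icc 1 N, ν (B m) = ν (⋃ n ∈ Finset.Icc 1 N, A n) := by
    rw [← hUB]
    exact (measure_biUnion_finset hdisjB (fun m _ => hB m)).symm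
  rw [hUnion]
  -- conclude
  have hfinal : (1 : ℝ≥0∞) ≤ ν (⋃ n ∈ Finset.Icc 1 N, A n) * ∑ i ∈ Finset.range N, p i := by
    rw [← hsumB]; exact hchain
  by_cases htop : (∑ i ∈ Finset.range N, p i) = ⊤
  · rw [htop]
    simp
  · have hzero : (∑ i ∈ Finset.range N, p i) ≠ 0 := by
      intro h0
      have : p 0 = 0 := by
        have := Finset.sum_eq_zero_iff.mp h0 0 (Finset.mem_range.mpr (by omega))
        exact this
      rw [hp0] at this
      exact one_ne_zero this
    calc (∑ i ∈ Finset.range N, p i)⁻¹ = 1 * (∑ i ∈ Finset.range N, p i)⁻¹ := by rw [one_mul]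
      _ ≤ (ν (⋃ n ∈ Finset.Icc 1 N, A n) * ∑ i ∈ Finset.range N, p i)
          * (∑ i ∈ Finset.range N, p i)⁻¹ := mul_le_mul_left hfinal _
      _ = ν (⋃ n ∈ Finset.Icc 1 N, A n) := by
          rw [mul_assoc, ENNReal.mul_inv_cancel hzero htop, mul_one]
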